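/- Let d ≥ 1, let P be a finite subset of the unit sphere intersected with ℝ^d_{++}, let π : P → ℝ, and let (y_p)_{p∈P} be a family of vectors in ℝ^d. Then there exists a production set Y* such that, for every p ∈ P, y_p ∈ Y*, p·y_p = sup_{y∈Y*} p·y, and sup_{y∈Y*} p·y = π(p), if and only if the following two conditions hold: (a) p·y_p = π(p) for every p ∈ P, and (b) p*·y_{p*} ≥ p*·y_p for every p, p* ∈ P. Moreover, in the sufficiency direction one may take Y* to be the free-disposal convex hull conv({y_p : p ∈ P}) + ℝ^d_{−}, which is nonempty, closed, convex, satisfies free disposal, and has finite support function at every strictly positive price. -/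

import Mathlib

open scoped RealInnerProductSpace Pointwise

/-- The strictly positive orthant of `ℝ^d`. -/
def posOrthant (d : ℕ) : Set (EuclideanSpace ℝ (Fin d)) := {p | ∀ i, 0 < p i}

/-- The nonpositive orthant of `ℝ^d`. -/
def negOrthant (d : ℕ) : Set (EuclideanSpace ℝ (Fin d)) := {y | ∀ i, y i ≤ 0}

/-- Free disposal: anything componentwise below a feasible point is feasible. -/
def FreeDisposal {d : ℕ} (Y : Set (EuclideanSpace ℝ (Fin d))) : Prop :=
  ∀ y ∈ Y, ∀ y' : EuclideanSpace ℝ (Fin d), (∀ i, y' i ≤ y i) → y' ∈ Y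

/-- Recession cone property: accumulation points of `y^m/‖y^m‖` along a norm-divergent
sequence in `Y` lie in the nonpositive orthant. -/
def RecessionConeProp {d : ℕ} (Y : Set (EuclideanSpace ℝ (Fin d))) : Prop :=
  ∀ ym : ℕ → EuclideanSpace ℝ (Fin d), (∀ m, ym m ∈ Y) →
    Filter.Tendsto (fun m => ‖ym m‖) Filter.atTop Filter.atTop →
    ∀ z : EuclideanSpace ℝ (Fin d),
      MapClusterPt z Filter.atTop (fun m => ‖ym m‖⁻¹ • ym m) → ∀ i, z i ≤ 0

/-- A production set: nonempty, closed, convex, free disposal, recession cone property. -/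
def IsProductionSet {d : ℕ} (Y : Set (EuclideanSpace ℝ (Fin d))) : Prop :=
  Y.Nonempty ∧ IsClosed Y ∧ Convex ℝ Y ∧ FreeDisposal Y ∧ RecessionConeProp Y

private lemma coord_abs_le_norm {d : ℕ} (x : EuclideanSpace ℝ (Fin d)) (i : Fin d) :
    |x i| ≤ ‖x‖ := by
  have h : x i = ⟪EuclideanSpace.single i (1:ℝ), x⟫ := by
    simp [EuclideanSpace.inner_single_left]
  rw [h]
  calc |⟪EuclideanSpace.single i (1:ℝ), x⟫| ≤ ‖EuclideanSpace.single i (1:ℝ)‖ * ‖x‖ :=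
        abs_real_inner_le_norm _ _
    _ = ‖x‖ := by rw [EuclideanSpace.norm_single]; simp

private lemma inner_neg_nonpos {d : ℕ} {p n : EuclideanSpace ℝ (Fin d)}
    (hp : ∀ i, 0 ≤ p i) (hn : n ∈ negOrthant d) : ⟪p, n⟫ ≤ 0 := by
  rw [PiLp.inner_apply]
  exact Finset.sum_nonpos fun i _ => mul_nonpos_of_nonpos_of_nonneg (hn i) (hp i)

private lemma inner_isLinear {d : ℕ} (p : EuclideanSpace ℝ (Fin d)) :
    IsLinearMap ℝ (fun y : EuclideanSpace ℝ (Fin d) => ⟪p, y⟫) :=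
  ⟨fun x y => inner_add_right p x y, fun c x => real_inner_smul_right p x c⟩

private lemma coord_isLinear {d : ℕ} (i : Fin d) :
    IsLinearMap ℝ (fun y : EuclideanSpace ℝ (Fin d) => y i) :=
  ⟨fun x y => rfl, fun c x => rfl⟩

private lemma hull_bound {d : ℕ} {s : Set (EuclideanSpace ℝ (Fin d))}
    {f : EuclideanSpace ℝ (Fin d) → ℝ} (hf : IsLinearMap ℝ f) {B : ℝ}
    (h : ∀ x ∈ s, f x ≤ B) : ∀ c ∈ convexHull ℝ s, f c ≤ B := fun c hc =>
  convexHull_min h (convex_halfSpace_le hf B) hc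

private lemma negOrthant_closed (d : ℕ) : IsClosed (negOrthant d) := by
  have h : negOrthant d = ⋂ i, {y : EuclideanSpace ℝ (Fin d) | y i ≤ 0} := by
    ext y; simp [negOrthant]
  rw [h]
  exact isClosed_iInter fun i =>
    isClosed_le (EuclideanSpace.proj i).continuous continuous_const

private lemma negOrthant_convex (d : ℕ) : Convex ℝ (negOrthant d) := by
  intro y hy z hz a b ha hb hab
  intro i
  show a * y i + b * z i ≤ 0
  exact add_nonpos (mul_nonpos_of_nonneg_of_nonpos ha (hy i))
    (mul_nonpos_of_nonneg_of_nonpos hb (hz i))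

/-- Main structural lemma about the free-disposal convex hull. -/
private lemma construction {d : ℕ}
    (P : Set (EuclideanSpace ℝ (Fin d))) (hPfin : P.Finite) (hPne : P.Nonempty)
    (yp : EuclideanSpace ℝ (Fin d) → EuclideanSpace ℝ (Fin d)) :
    IsClosed (convexHull ℝ (yp '' P) + negOrthant d) ∧
    Convex ℝ (convexHull ℝ (yp '' P) + negOrthant d) ∧
    FreeDisposal (convexHull ℝ (yp '' P) + negOrthant d) ∧
    RecessionConeProp (convexHull ℝ (yp '' P) + negOrthant d) ∧
    (∀ p ∈ P, yp p ∈ convexHull ℝ (yp '' P) + negOrthant d) ∧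
    (∀ p, (∀ i, 0 ≤ p i) → (∀ q ∈ P, ⟪p, yp q⟫ ≤ ⟪p, yp p⟫) →
      ∀ y ∈ convexHull ℝ (yp '' P) + negOrthant d, ⟪p, y⟫ ≤ ⟪p, yp p⟫) ∧
    (∀ p ∈ posOrthant d,
      BddAbove ((fun y => ⟪p, y⟫) '' (convexHull ℝ (yp '' P) + negOrthant d))) := by
  set Y : Set (EuclideanSpace ℝ (Fin d)) := convexHull ℝ (yp '' P) + negOrthant d with hY
  have hFne : hPfin.toFinset.Nonempty := hPfin.toFinset_nonempty.mpr hPne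
  -- generic upper bound on linear functionals over Y
  have key : ∀ (f : EuclideanSpace ℝ (Fin d) → ℝ), IsLinearMap ℝ f → ∀ B : ℝ,
      (∀ q ∈ P, f (yp q) ≤ B) → (∀ n ∈ negOrthant d, f n ≤ 0) →
      ∀ y ∈ Y, f y ≤ B := by
    intro f hf B hB hneg y hy
    obtain ⟨c, hc, n, hn, rfl⟩ := Set.mem_add.mp hy
    have h1 : f c ≤ B := hull_bound hf (by rintro _ ⟨q, hq, rfl⟩; exact hB q hq) c hc
    have h2 : f n ≤ 0 := hneg n hn
    calc f (c + n) = f c + f n := hf.map_add c n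
      _ ≤ B + 0 := add_le_add h1 h2
      _ = B := add_zero B
  have hmem : ∀ p ∈ P, yp p ∈ Y := by
    intro p hp
    refine Set.mem_add.mpr ⟨yp p, subset_convexHull ℝ _ ⟨p, hp, rfl⟩, 0, ?_, add_zero _⟩
    intro i; simp
  refine ⟨?_, ?_, ?_, ?_, hmem, ?_, ?_⟩
  · -- closed
    rw [hY, add_comm]
    exact (negOrthant_closed d).add_right_of_isCompact
      ((hPfin.image yp).isCompact_convexHull ℝ)
  · exact (convex_convexHull ℝ _).add (negOrthant_convex d)
  · -- free disposal
    intro y hy y' hy'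
    obtain ⟨c, hc, n, hn, rfl⟩ := Set.mem_add.mp hy
    refine Set.mem_add.mpr ⟨c, hc, y' - c, ?_, by abel⟩
    intro i
    have h1 : y' i ≤ c i + n i := hy' i
    have h2 : n i ≤ 0 := hn i
    show y' i - c i ≤ 0
    linarith
  · -- recession cone property
    intro ym hym htend z hz i
    by_contra hzi
    push_neg at hzi
    set ε := z i with hε
    set M : ℝ := hPfin.toFinset.sup' hFne (fun q => yp q i) with hM
    have hMi : ∀ y ∈ Y, y i ≤ M := by
      refine key _ (coord_isLinear i) M ?_ (fun n hn => hn i)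
      intro q hq
      exact Finset.le_sup' (fun q => yp q i) (hPfin.mem_toFinset.mpr hq)
    have hev : ∀ᶠ m in Filter.atTop, 2 * (|M| + 1) / ε < ‖ym m‖ :=
      htend.eventually_gt_atTop _
    have hfreq := (mapClusterPt_iff_frequently.mp hz) (Metric.ball z (ε/2))
      (Metric.ball_mem_nhds _ (by positivity))
    obtain ⟨m, hm1, hm2⟩ := (hfreq.and_eventually hev).exists
    have hRpos : 0 < ‖ym m‖ := lt_trans (by positivity) hm2
    have h1 : (‖ym m‖⁻¹ • ym m) i ≤ ‖ym m‖⁻¹ * M := by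
      show ‖ym m‖⁻¹ * ym m i ≤ ‖ym m‖⁻¹ * M
      exact mul_le_mul_of_nonneg_left (hMi _ (hym m)) (inv_nonneg.mpr hRpos.le)
    have h2 : ‖ym m‖⁻¹ * M < ε / 2 := by
      have ha : 2 * (|M| + 1) < ‖ym m‖ * ε := (div_lt_iff₀ hzi).mp hm2
      have hb : ‖ym m‖⁻¹ * M ≤ ‖ym m‖⁻¹ * |M| :=
        mul_le_mul_of_nonneg_left (le_abs_self M) (by positivity)
      have hc : ‖ym m‖⁻¹ * |M| < ε / 2 := by
        rw [inv_mul_eq_div, div_lt_iff₀ hRpos]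
        nlinarith
      linarith
    have h3 : dist (‖ym m‖⁻¹ • ym m) z < ε / 2 := Metric.mem_ball.mp hm1
    have h4 : |(‖ym m‖⁻¹ • ym m - z) i| ≤ ‖‖ym m‖⁻¹ • ym m - z‖ :=
      coord_abs_le_norm _ i
    have h5 : (‖ym m‖⁻¹ • ym m - z) i = (‖ym m‖⁻¹ • ym m) i - z i := rfl
    rw [h5, ← dist_eq_norm] at h4
    have h6 : |(‖ym m‖⁻¹ • ym m) i - z i| < ε / 2 := lt_of_le_of_lt h4 h3
    rw [abs_lt] at h6
    linarith [h6.1, h6.2]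
  · -- profit maximization
    intro p hp hwapm y hy
    refine key _ (inner_isLinear p) _ hwapm (fun n hn => inner_neg_nonpos hp hn) y hy
  · -- bounded above
    intro p hp
    refine ⟨hPfin.toFinset.sup' hFne (fun q => ⟪p, yp q⟫), ?_⟩
    rintro _ ⟨y, hy, rfl⟩
    refine key _ (inner_isLinear p) _ ?_
      (fun n hn => inner_neg_nonpos (fun i => (hp i).le) hn) y hy
    intro q hq
    exact Finset.le_sup' (fun q => ⟪p, yp q⟫) (hPfin.mem_toFinset.mpr hq)

/-- Proposition 6.1: rationalizability of candidate supply vectors by a production set,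
characterized by the weak axiom of profit maximization; moreover the free-disposal convex
hull of the supply vectors works in the sufficiency direction. -/
theorem stmt4 (d : ℕ) (hd : 1 ≤ d)
    (P : Set (EuclideanSpace ℝ (Fin d))) (hPfin : P.Finite) (hPne : P.Nonempty)
    (hPsph : ∀ p ∈ P, ‖p‖ = 1) (hPpos : P ⊆ posOrthant d)
    (prof : EuclideanSpace ℝ (Fin d) → ℝ)
    (yp : EuclideanSpace ℝ (Fin d) → EuclideanSpace ℝ (Fin d)) :
    ((∃ Ystar : Set (EuclideanSpace ℝ (Fin d)), IsProductionSet Ystar ∧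
        ∀ p ∈ P, yp p ∈ Ystar ∧ (∀ y ∈ Ystar, ⟪p, y⟫ ≤ ⟪p, yp p⟫) ∧ ⟪p, yp p⟫ = prof p) ↔
      ((∀ p ∈ P, ⟪p, yp p⟫ = prof p) ∧
        ∀ p ∈ P, ∀ pstar ∈ P, ⟪pstar, yp p⟫ ≤ ⟪pstar, yp pstar⟫)) ∧
    (((∀ p ∈ P, ⟪p, yp p⟫ = prof p) ∧
        ∀ p ∈ P, ∀ pstar ∈ P, ⟪pstar, yp p⟫ ≤ ⟪pstar, yp pstar⟫) →
      (convexHull ℝ (yp '' P) + negOrthant d).Nonempty ∧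
      IsClosed (convexHull ℝ (yp '' P) + negOrthant d) ∧
      Convex ℝ (convexHull ℝ (yp '' P) + negOrthant d) ∧
      FreeDisposal (convexHull ℝ (yp '' P) + negOrthant d) ∧
      (∀ p ∈ posOrthant d,
        BddAbove ((fun y => ⟪p, y⟫) '' (convexHull ℝ (yp '' P) + negOrthant d))) ∧
      ∀ p ∈ P, yp p ∈ convexHull ℝ (yp '' P) + negOrthant d ∧
        (∀ y ∈ convexHull ℝ (yp '' P) + negOrthant d, ⟪p, y⟫ ≤ ⟪p, yp p⟫) ∧
        ⟪p, yp p⟫ = prof p) := by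
  obtain ⟨hclosed, hconvex, hfree, hrec, hmem, hmax, hbdd⟩ :=
    construction P hPfin hPne yp
  have hsuff : ((∀ p ∈ P, ⟪p, yp p⟫ = prof p) ∧
      ∀ p ∈ P, ∀ pstar ∈ P, ⟪pstar, yp p⟫ ≤ ⟪pstar, yp pstar⟫) →
      ∀ p ∈ P, yp p ∈ convexHull ℝ (yp '' P) + negOrthant d ∧
        (∀ y ∈ convexHull ℝ (yp '' P) + negOrthant d, ⟪p, y⟫ ≤ ⟪p, yp p⟫) ∧
        ⟪p, yp p⟫ = prof p := by
    rintro ⟨ha, hb⟩ p hp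
    exact ⟨hmem p hp,
      hmax p (fun i => (hPpos hp i).le) (fun q hq => hb q hq p hp), ha p hp⟩
  obtain ⟨p0, hp0⟩ := hPne
  constructor
  · constructor
    · rintro ⟨Y, _, hY⟩
      refine ⟨fun p hp => (hY p hp).2.2, fun p hp pstar hpstar => ?_⟩
      exact (hY pstar hpstar).2.1 (yp p) (hY p hp).1
    · intro h
      exact ⟨convexHull ℝ (yp '' P) + negOrthant d,
        ⟨⟨yp p0, hmem p0 hp0⟩, hclosed, hconvex, hfree, hrec⟩, hsuff h⟩
  · intro h
    exact ⟨⟨yp p0, hmem p0 hp0⟩, hclosed, hconvex, hfree, hbdd, hsuff h⟩
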